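/- arXiv:0707.2327 — 5 statements merged into one kernel-verified Lean document; each statement's English description precedes it below -/
import Mathlib

section
/- Let R be a real closed field, A = R[x₁,…,x_n], and δ ∈ Sper A with ν_δ(x_j) = 0 for 1 ≤ j ≤ p and ν_δ(x_j) > 0 for j > p. If I_δ ≠ ∅ then G_δ ≠ ∅; moreover there exist q ∈ G_δ and a positive integer N such that for all j ∈ I_δ one has 1/|x_j|_δ < |x_q|_δ^N in A(δ). -/
/-- An ordered subfield `R` of a linearly ordered field is real closed if every nonnegative
element has a square root in `R` and every polynomial over `R` of odd degree has a root. -/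
def IsRealClosedSubfield {F : Type*} [Field F] [LinearOrder F] [IsStrictOrderedRing F] (R : Subfield F) : Prop :=
  (∀ x : F, x ∈ R → 0 ≤ x → ∃ y ∈ R, y ^ 2 = x) ∧
    ∀ p : Polynomial R, Odd p.natDegree → ∃ z : R, Polynomial.eval z p = 0

/-- The convex hull of a subring `B` in a linearly ordered field `F`: the valuation ring
of all elements bounded in absolute value by an element of `B`. -/
def convexHullSubring {F : Type*} [Field F] [LinearOrder F] [IsStrictOrderedRing F] (B : Subring F) : Subring F where
  carrier := {x : F | ∃ z ∈ B, |x| ≤ z}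
  zero_mem' := ⟨0, B.zero_mem, by simp⟩
  one_mem' := ⟨1, B.one_mem, by simp⟩
  add_mem' := by
    rintro a b ⟨z₁, hz₁, h₁⟩ ⟨z₂, hz₂, h₂⟩
    exact ⟨z₁ + z₂, B.add_mem hz₁ hz₂, (abs_add_le a b).trans (add_le_add h₁ h₂)⟩
  neg_mem' := by
    rintro a ⟨z, hz, h⟩
    exact ⟨z, hz, by simpa using h⟩
  mul_mem' := by
    rintro a b ⟨z₁, hz₁, h₁⟩ ⟨z₂, hz₂, h₂⟩
    refine ⟨z₁ * z₂, B.mul_mem hz₁ hz₂, ?_⟩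
    rw [abs_mul]
    exact mul_le_mul h₁ h₂ (abs_nonneg b) ((abs_nonneg a).trans h₁)

/-- The subring `A[δ] = R[x₁(δ),…,x_n(δ)]` of the ordered field `F = A(δ)`: the subring
generated by the subfield `R` together with the coordinates `x j`. -/
def pointRing {F : Type*} [Field F] [LinearOrder F] [IsStrictOrderedRing F] (R : Subfield F) {n : ℕ}
    (x : Fin n → F) : Subring F :=
  Subring.closure ((R : Set F) ∪ Set.range x)

/-- `y` is infinitesimal over `R`: `|y| < ε` for every positive `ε ∈ R`. -/
def IsInfinitesimalOver {F : Type*} [Field F] [LinearOrder F] [IsStrictOrderedRing F] (R : Subfield F) (y : F) : Prop :=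
  ∀ ε ∈ R, 0 < ε → |y| < ε

/-- `|y|` lies between two positive constants of `R`. -/
def IsBoundedUnitOver {F : Type*} [Field F] [LinearOrder F] [IsStrictOrderedRing F] (R : Subfield F) (y : F) : Prop :=
  ∃ c₁ ∈ R, ∃ c₂ ∈ R, 0 < c₁ ∧ c₁ < |y| ∧ |y| < c₂

/-- `y` is infinitely large over `R`: `|y| > N` for every `N ∈ R`. -/
def IsInfiniteOver {F : Type*} [Field F] [LinearOrder F] [IsStrictOrderedRing F] (R : Subfield F) (y : F) : Prop :=
  ∀ N ∈ R, N < |y|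

/-- The group of units of a subring `V` of a field `F`, as a subgroup of `Fˣ`. -/
def unitSubgroup {F : Type*} [Field F] [LinearOrder F] [IsStrictOrderedRing F] (V : Subring F) : Subgroup Fˣ where
  carrier := {u : Fˣ | (u : F) ∈ V ∧ ((u⁻¹ : Fˣ) : F) ∈ V}
  one_mem' := by simp [V.one_mem]
  mul_mem' := by
    rintro a b ⟨ha1, ha2⟩ ⟨hb1, hb2⟩
    refine ⟨by simpa using V.mul_mem ha1 hb1, ?_⟩
    have : ((b⁻¹ : Fˣ) : F) * ((a⁻¹ : Fˣ) : F) ∈ V := V.mul_mem hb2 ha2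
    simpa [mul_comm] using this
  inv_mem' := by
    rintro a ⟨h1, h2⟩
    exact ⟨h2, by simpa using h1⟩

/-- The order on the value group `Fˣ/Vˣ` attached to the valuation ring `V`:
the class of `u` is `≤` the class of `w` iff `w/u ∈ V`. -/
def valueGroupLE {F : Type*} [Field F] [LinearOrder F] [IsStrictOrderedRing F] (V : Subring F)
    (a b : Fˣ ⧸ unitSubgroup V) : Prop :=
  ∃ u w : Fˣ, a = QuotientGroup.mk u ∧ b = QuotientGroup.mk w ∧ ((w * u⁻¹ : Fˣ) : F) ∈ V

lemma abs_mem_subfield {F : Type*} [Field F] [LinearOrder F] [IsStrictOrderedRing F] (R : Subfield F) {r : F}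
    (h : r ∈ R) : |r| ∈ R := by
  rcases abs_choice r with h' | h' <;> rw [h']
  exacts [h, R.neg_mem h]

/-- Every element of the point ring is bounded by `c * B ^ N` with `c ∈ R`. -/
lemma pointRing_bound {F : Type*} [Field F] [LinearOrder F] [IsStrictOrderedRing F] (R : Subfield F) {n : ℕ}
    (x : Fin n → F) (B : F) (hB : 1 ≤ B) (hx : ∀ j, |x j| ≤ B) :
    ∀ z ∈ pointRing R x, ∃ c ∈ R, ∃ N : ℕ, |z| ≤ c * B ^ N := by
  have hB0 : (0:F) < B := lt_of_lt_of_le one_pos hB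
  intro z hz
  induction hz using Subring.closure_induction with
  | mem y hy =>
    rcases hy with hy | ⟨j, rfl⟩
    · exact ⟨|y|, abs_mem_subfield R hy, 0, by simp⟩
    · exact ⟨1, R.one_mem, 1, by simpa using hx j⟩
  | zero => exact ⟨0, R.zero_mem, 0, by simp⟩
  | one => exact ⟨1, R.one_mem, 0, by simp⟩
  | add a b ha hb iha ihb =>
    obtain ⟨c₁, hc₁, N₁, h₁⟩ := iha
    obtain ⟨c₂, hc₂, N₂, h₂⟩ := ihb
    have hc₁0 : 0 ≤ c₁ := by
      by_contra hc
      push_neg at hc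
      nlinarith [abs_nonneg a, pow_pos hB0 N₁]
    have hc₂0 : 0 ≤ c₂ := by
      by_contra hc
      push_neg at hc
      nlinarith [abs_nonneg b, pow_pos hB0 N₂]
    refine ⟨c₁ + c₂, R.add_mem hc₁ hc₂, max N₁ N₂, ?_⟩
    have e₁ : B ^ N₁ ≤ B ^ max N₁ N₂ := pow_le_pow_right₀ hB (le_max_left _ _)
    have e₂ : B ^ N₂ ≤ B ^ max N₁ N₂ := pow_le_pow_right₀ hB (le_max_right _ _)
    calc |a + b| ≤ |a| + |b| := abs_add_le a b
      _ ≤ c₁ * B ^ N₁ + c₂ * B ^ N₂ := add_le_add h₁ h₂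
      _ ≤ c₁ * B ^ max N₁ N₂ + c₂ * B ^ max N₁ N₂ := by
          gcongr
      _ = (c₁ + c₂) * B ^ max N₁ N₂ := by ring
  | neg a ha iha =>
    obtain ⟨c, hc, N, h⟩ := iha
    exact ⟨c, hc, N, by simpa using h⟩
  | mul a b ha hb iha ihb =>
    obtain ⟨c₁, hc₁, N₁, h₁⟩ := iha
    obtain ⟨c₂, hc₂, N₂, h₂⟩ := ihb
    refine ⟨c₁ * c₂, R.mul_mem hc₁ hc₂, N₁ + N₂, ?_⟩
    have : |a * b| ≤ (c₁ * B ^ N₁) * (c₂ * B ^ N₂) := by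
      rw [abs_mul]
      exact mul_le_mul h₁ h₂ (abs_nonneg b) ((abs_nonneg a).trans h₁)
    calc |a * b| ≤ (c₁ * B ^ N₁) * (c₂ * B ^ N₂) := this
      _ = (c₁ * c₂) * B ^ (N₁ + N₂) := by rw [pow_add]; ring

/-- Let `δ ∈ Sper A` with `ν_δ(x_j) = 0` for `j ≤ p` and `ν_δ(x_j) > 0` for `j > p`.
If `I_δ ≠ ∅` then `G_δ ≠ ∅`; moreover there exist `q ∈ G_δ` and a positive integer `N`
such that `1/|x_j| < |x_q|^N` for all `j ∈ I_δ`. -/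
theorem infinitesimal_implies_infinite_coordinate {F : Type*} [Field F] [LinearOrder F] [IsStrictOrderedRing F]
    (R : Subfield F) (hR : IsRealClosedSubfield R) {n : ℕ} (x : Fin n → F) (p : ℕ)
    -- `ν_δ(x j) = 0` for `j ≤ p`
    (h0 : ∀ j : Fin n, (j : ℕ) < p → x j ≠ 0 ∧
      x j ∈ convexHullSubring (pointRing R x) ∧
      (x j)⁻¹ ∈ convexHullSubring (pointRing R x))
    -- `ν_δ(x j) > 0` for `j > p` (with the convention `ν(0) = ∞ > 0`)
    (hpos : ∀ j : Fin n, p ≤ (j : ℕ) →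
      x j = 0 ∨ (x j)⁻¹ ∉ convexHullSubring (pointRing R x)) :
    (∃ j : Fin n, (j : ℕ) < p ∧ IsInfinitesimalOver R (x j)) →
      ∃ q : Fin n, (q : ℕ) < p ∧ IsInfiniteOver R (x q) ∧
        ∃ N : ℕ, 0 < N ∧ ∀ j : Fin n, (j : ℕ) < p → IsInfinitesimalOver R (x j) →
          1 / |x j| < |x q| ^ N := by
    classical
  rintro ⟨j0, hj0p, hj0inf⟩
  have hj0ne : x j0 ≠ 0 := (h0 j0 hj0p).1
  have hj0inv : (x j0)⁻¹ ∈ convexHullSubring (pointRing R x) := (h0 j0 hj0p).2.2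
  -- coordinates beyond p are bounded by 1
  have hge : ∀ j : Fin n, p ≤ (j : ℕ) → |x j| ≤ 1 := by
    intro j hj
    rcases hpos j hj with h | h
    · simp [h]
    · by_contra h1
      push_neg at h1
      exact h ⟨1, (pointRing R x).one_mem, by
        rw [abs_inv]
        exact inv_le_one_of_one_le₀ h1.le⟩
  -- Step B: there is an infinitely large coordinate with index < p
  have hexinf : ∃ q : Fin n, (q : ℕ) < p ∧ IsInfiniteOver R (x q) := by
    by_contra hcon
    push_neg at hcon
    have hbd : ∀ j : Fin n, ∃ r ∈ R, |x j| ≤ r := by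
      intro j
      by_cases hjp : (j : ℕ) < p
      · have hcj := hcon j hjp
        unfold IsInfiniteOver at hcj
        push_neg at hcj
        obtain ⟨N, hN, hNle⟩ := hcj
        exact ⟨N, hN, hNle⟩
      · exact ⟨1, R.one_mem, hge j (le_of_not_gt hjp)⟩
    -- every element of the point ring is bounded by an element of R
    have hring : ∀ z ∈ pointRing R x, ∃ c ∈ R, |z| ≤ c := by
      intro z hz
      induction hz using Subring.closure_induction with
      | mem y hy =>
        rcases hy with hy | ⟨j, rfl⟩
        · exact ⟨|y|, abs_mem_subfield R hy, le_refl _⟩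
        · exact hbd j
      | zero => exact ⟨0, R.zero_mem, by simp⟩
      | one => exact ⟨1, R.one_mem, by simp⟩
      | add a b ha hb iha ihb =>
        obtain ⟨c₁, hc₁, h₁⟩ := iha
        obtain ⟨c₂, hc₂, h₂⟩ := ihb
        exact ⟨c₁ + c₂, R.add_mem hc₁ hc₂, (abs_add_le a b).trans (add_le_add h₁ h₂)⟩
      | neg a ha iha =>
        obtain ⟨c, hc, h⟩ := iha
        exact ⟨c, hc, by simpa using h⟩
      | mul a b ha hb iha ihb =>
        obtain ⟨c₁, hc₁, h₁⟩ := iha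
        obtain ⟨c₂, hc₂, h₂⟩ := ihb
        refine ⟨c₁ * c₂, R.mul_mem hc₁ hc₂, ?_⟩
        rw [abs_mul]
        exact mul_le_mul h₁ h₂ (abs_nonneg b) ((abs_nonneg a).trans h₁)
    obtain ⟨z, hz, hle⟩ := hj0inv
    obtain ⟨c, hc, hzc⟩ := hring z hz
    have hinvle : |x j0|⁻¹ ≤ c := by
      rw [← abs_inv]
      exact hle.trans ((le_abs_self z).trans hzc)
    have hpos0 : 0 < |x j0| := abs_pos.mpr hj0ne
    have hcpos : 0 < c := lt_of_lt_of_le (inv_pos.mpr hpos0) hinvle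
    have hc1 : (0:F) < c + 1 := by linarith
    have hsm : |x j0| < (c + 1)⁻¹ :=
      hj0inf (c + 1)⁻¹ (R.inv_mem (R.add_mem hc R.one_mem)) (inv_pos.mpr hc1)
    have : c + 1 < |x j0|⁻¹ := by
      have := inv_strictAnti₀ hpos0 hsm
      rwa [inv_inv] at this
    linarith
  -- Step C: pick q maximizing |x q| among infinite coordinates
  obtain ⟨q, hqmem, hqmax⟩ :=
    Finset.exists_max_image
      (Finset.univ.filter fun j : Fin n => (j : ℕ) < p ∧ IsInfiniteOver R (x j))
      (fun j => |x j|)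
      (by
        obtain ⟨q, hq1, hq2⟩ := hexinf
        exact ⟨q, Finset.mem_filter.mpr ⟨Finset.mem_univ _, hq1, hq2⟩⟩)
  obtain ⟨-, hqp, hqinf⟩ := Finset.mem_filter.mp hqmem
  set B := |x q| with hBdef
  have hB1 : 1 ≤ B := (hqinf 1 R.one_mem).le
  have hxB : ∀ j, |x j| ≤ B := by
    intro j
    by_cases hjp : (j : ℕ) < p
    · by_cases hjinf : IsInfiniteOver R (x j)
      · exact hqmax j (Finset.mem_filter.mpr ⟨Finset.mem_univ _, hjp, hjinf⟩)
      · unfold IsInfiniteOver at hjinf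
        push_neg at hjinf
        obtain ⟨N, hN, hNle⟩ := hjinf
        exact hNle.trans (hqinf N hN).le
    · exact (hge j (le_of_not_gt hjp)).trans hB1
  -- Step D: quantitative bound
  have key : ∀ j : Fin n, ∃ N : ℕ,
      ((j : ℕ) < p → IsInfinitesimalOver R (x j) → 1 / |x j| < B ^ (N + 1)) := by
    intro j
    by_cases hjp : (j : ℕ) < p
    · obtain ⟨hne, -, hinv⟩ := h0 j hjp
      obtain ⟨z, hz, hle⟩ := hinv
      obtain ⟨c, hc, N, hzc⟩ := pointRing_bound R x B hB1 hxB z hz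
      refine ⟨N, fun _ _ => ?_⟩
      have hBpos : 0 < B := lt_of_lt_of_le one_pos hB1
      have hcB : c < B := hqinf c hc
      calc 1 / |x j| = |(x j)⁻¹| := by rw [one_div, abs_inv]
        _ ≤ z := hle
        _ ≤ |z| := le_abs_self z
        _ ≤ c * B ^ N := hzc
        _ < B * B ^ N := mul_lt_mul_of_pos_right hcB (pow_pos hBpos N)
        _ = B ^ (N + 1) := by rw [pow_succ]; ring
    · exact ⟨0, fun h _ => absurd h hjp⟩
  choose g hg using key
  refine ⟨q, hqp, hqinf, Finset.univ.sup g + 1, Nat.succ_pos _, ?_⟩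
  intro j hjp hjinf
  have h1 := hg j hjp hjinf
  have h2 : B ^ (g j + 1) ≤ B ^ (Finset.univ.sup g + 1) :=
    pow_le_pow_right₀ hB1 (Nat.succ_le_succ (Finset.le_sup (Finset.mem_univ j)))
  exact lt_of_lt_of_le h1 h2
end

section
/- Let R be a real closed field, A = R[x₁,…,x_n], δ ∈ Sper A, and let T ⊆ {1,…,n} satisfy G_δ ⊆ T ⊆ G_δ ∪ F_δ. Set y_j = x_j for j ∉ T and y_j = 1/x_j for j ∈ T, and let B_T = R[y₁,…,y_n] ⊆ A(δ) be the R-subalgebra generated by the images of the y_j, with δ* the induced point of Sper B_T (same field A(δ), same ordering). Then δ* is a finite point of Sper B_T, i.e., every element of B_T[δ*] is bounded in absolute value by a constant from R. -/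
/-- Let `δ ∈ Sper A` and `T` with `G_δ ⊆ T ⊆ G_δ ∪ F_δ`.  Setting `y_j = x_j` for `j ∉ T`
and `y_j = 1/x_j` for `j ∈ T`, the induced point `δ*` of `Sper B_T` (with
`B_T = R[y₁,…,y_n]` the subring of `A(δ)` generated by `R` and the `y_j`) is finite:
every element of `B_T[δ*]` is bounded in absolute value by a constant from `R`. -/
theorem induced_point_is_finite {F : Type*} [Field F] [LinearOrder F] [IsStrictOrderedRing F]
    (R : Subfield F) (hR : IsRealClosedSubfield R) {n : ℕ} (x : Fin n → F)
    (T : Finset (Fin n))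
    -- `G_δ ⊆ T`
    (hT1 : ∀ j : Fin n, IsInfiniteOver R (x j) → j ∈ T)
    -- `T ⊆ G_δ ∪ F_δ`
    (hT2 : ∀ j ∈ T, IsInfiniteOver R (x j) ∨ IsBoundedUnitOver R (x j)) :
    ∀ z ∈ pointRing R (fun j => if j ∈ T then (x j)⁻¹ else x j), ∃ N ∈ R, |z| ≤ N := by
  have key : pointRing R (fun j => if j ∈ T then (x j)⁻¹ else x j) ≤
      convexHullSubring R.toSubring := by
    apply Subring.closure_le.mpr
    rintro a (ha | ⟨j, rfl⟩)
    · refine ⟨|a|, ?_, le_rfl⟩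
      rcases le_or_gt 0 a with h | h
      · rwa [abs_of_nonneg h]
      · rw [abs_of_neg h]; exact R.neg_mem ha
    · dsimp only
      split_ifs with hj
      · rcases hT2 j hj with h | ⟨c₁, hc₁, c₂, hc₂, hpos, hlt, _⟩
        · have h1 : (1 : F) < |x j| := h 1 R.one_mem
          refine ⟨1, R.one_mem, ?_⟩
          rw [abs_inv]
          exact le_of_lt (inv_lt_one_of_one_lt₀ h1)
        · refine ⟨c₁⁻¹, R.inv_mem hc₁, ?_⟩
          rw [abs_inv]
          exact inv_anti₀ hpos hlt.le
      · have h := mt (hT1 j) hj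
        simp only [IsInfiniteOver, not_forall, not_lt] at h
        obtain ⟨N, hN, hle⟩ := h
        exact ⟨N, hN, hle⟩
  exact fun z hz => key hz
end

section
/- In the setting above (δ ∈ Sper A, G_δ ⊆ T ⊆ G_δ ∪ F_δ, δ* the induced finite point of Sper B_T with the same ordered field A(δ)), let R_{δ*} be the convex hull of R in A(δ) and R_δ the convex hull of A[δ]. Then R_{δ*} ⊆ R_δ, the valuation ν_{δ*} satisfies ν_{δ*}(y_j) = 0 for j ∈ F_δ and ν_{δ*}(y_j) > 0 for j ∈ I_δ ∪ G_δ, and the induced order-preserving surjection φ̃ : Γ_{δ*} → Γ_δ of value groups satisfies φ̃(ν_{δ*}(y_j)) = ν_δ(x_j) for all j. -/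
/-- Setting of the previous statement: `δ ∈ Sper A`, `G_δ ⊆ T ⊆ G_δ ∪ F_δ`, `δ*` the induced
finite point of `Sper B_T` on the same ordered field `F = A(δ)`.  Let `R_{δ*}` be the convex
hull of `R` in `F` and `R_δ` the convex hull of `A[δ]`.  Then `R_{δ*} ⊆ R_δ`; the valuation
`ν_{δ*}` satisfies `ν_{δ*}(y_j) = 0` for `j ∈ F_δ` and `ν_{δ*}(y_j) > 0` for
`j ∈ I_δ ∪ G_δ`; and the induced order-preserving surjection `φ̃ : Γ_{δ*} → Γ_δ` of value
groups satisfies `φ̃(ν_{δ*}(y_j)) = ν_δ(x_j)` for all `j`. -/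
theorem induced_valuation_composed {F : Type*} [Field F] [LinearOrder F] [IsStrictOrderedRing F]
    (R : Subfield F) (hR : IsRealClosedSubfield R) {n : ℕ} (x : Fin n → F)
    (T : Finset (Fin n))
    (hT1 : ∀ j : Fin n, IsInfiniteOver R (x j) → j ∈ T)
    (hT2 : ∀ j ∈ T, IsInfiniteOver R (x j) ∨ IsBoundedUnitOver R (x j))
    (y : Fin n → F) (hy : y = fun j => if j ∈ T then (x j)⁻¹ else x j)
    (Vδ : Subring F) (hVδ : Vδ = convexHullSubring (pointRing R x))
    (Vstar : Subring F) (hVstar : Vstar = convexHullSubring R.toSubring) :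
    -- `R_{δ*} ⊆ R_δ`
    (∀ z : F, z ∈ Vstar → z ∈ Vδ) ∧
    -- `ν_{δ*}(y_j) = 0` for `j ∈ F_δ`
    (∀ j : Fin n, IsBoundedUnitOver R (x j) →
      y j ≠ 0 ∧ y j ∈ Vstar ∧ (y j)⁻¹ ∈ Vstar) ∧
    -- `ν_{δ*}(y_j) > 0` for `j ∈ I_δ ∪ G_δ`
    (∀ j : Fin n,
      (IsInfiniteOver R (x j) ∨
        (IsInfinitesimalOver R (x j) ∧ x j ≠ 0 ∧ (x j)⁻¹ ∈ Vδ)) →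
      y j ≠ 0 ∧ y j ∈ Vstar ∧ (y j)⁻¹ ∉ Vstar) ∧
    -- the induced surjective order-preserving map `φ̃ : Γ_{δ*} → Γ_δ` with
    -- `φ̃(ν_{δ*}(y_j)) = ν_δ(x_j)`
    ∃ φ : Fˣ ⧸ unitSubgroup Vstar →* Fˣ ⧸ unitSubgroup Vδ,
      Function.Surjective φ ∧
      (∀ u : Fˣ, φ (QuotientGroup.mk u) = QuotientGroup.mk u) ∧
      (∀ a b : Fˣ ⧸ unitSubgroup Vstar, valueGroupLE Vstar a b →
        valueGroupLE Vδ (φ a) (φ b)) ∧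
      (∀ (j : Fin n) (u w : Fˣ), (u : F) = y j → (w : F) = x j →
        φ (QuotientGroup.mk u) = QuotientGroup.mk w) := by
  subst hy hVδ hVstar
  have hRsub : ∀ z : F, z ∈ R → z ∈ pointRing R x := fun z hz =>
    Subring.subset_closure (Or.inl hz)
  have hxmem : ∀ j, x j ∈ pointRing R x := fun j =>
    Subring.subset_closure (Or.inr ⟨j, rfl⟩)
  have h1 : ∀ z : F, z ∈ convexHullSubring R.toSubring →
      z ∈ convexHullSubring (pointRing R x) := by
    rintro z ⟨w, hw, h⟩
    exact ⟨w, hRsub w hw, h⟩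
  have hTinv : ∀ j ∈ T, x j ≠ 0 ∧ (x j)⁻¹ ∈ convexHullSubring R.toSubring := by
    intro j hj
    rcases hT2 j hj with h | ⟨c₁, hc₁, c₂, hc₂, hc₁pos, hlt, hlt2⟩
    · have h1' : (1:F) < |x j| := h 1 R.one_mem
      have hx0 : x j ≠ 0 := by
        intro h0
        rw [h0, abs_zero] at h1'
        linarith
      refine ⟨hx0, 1, R.one_mem, ?_⟩
      rw [abs_inv]
      have : (0:F) < |x j| := by linarith
      rw [inv_le_one₀ this]
      linarith
    · have hx0 : x j ≠ 0 := by
        intro h0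
        rw [h0, abs_zero] at hlt
        linarith
      refine ⟨hx0, c₁⁻¹, R.inv_mem hc₁, ?_⟩
      rw [abs_inv]
      exact inv_anti₀ hc₁pos hlt.le
  refine ⟨h1, ?_, ?_, ?_⟩
  · -- bounded units
    intro j hbu
    obtain ⟨c₁, hc₁, c₂, hc₂, hc₁pos, hlt, hlt2⟩ := hbu
    have hx0 : x j ≠ 0 := by
      intro h0
      rw [h0, abs_zero] at hlt
      linarith
    have hxm : x j ∈ convexHullSubring R.toSubring := ⟨c₂, hc₂, hlt2.le⟩
    have hxim : (x j)⁻¹ ∈ convexHullSubring R.toSubring := by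
      refine ⟨c₁⁻¹, R.inv_mem hc₁, ?_⟩
      rw [abs_inv]
      exact inv_anti₀ hc₁pos hlt.le
    by_cases hj : j ∈ T <;> simp only [hj, if_true, if_false, ne_eq, inv_inv, inv_eq_zero]
    · exact ⟨hx0, hxim, hxm⟩
    · exact ⟨hx0, hxm, hxim⟩
  · -- positive valuation
    intro j hcase
    rcases hcase with h | ⟨h, hx0, _⟩
    · have hj : j ∈ T := hT1 j h
      obtain ⟨hx0, hxim⟩ := hTinv j hj
      simp only [hj, if_true, ne_eq, inv_inv, inv_eq_zero]
      refine ⟨hx0, hxim, ?_⟩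
      rintro ⟨z, hz, hle⟩
      exact absurd hle (not_le.mpr (h z hz))
    · have hj : j ∉ T := by
        intro hj
        rcases hT2 j hj with h' | ⟨c₁, hc₁, c₂, hc₂, hc₁pos, hlt, hlt2⟩
        · have := h' 1 R.one_mem
          have := h 1 R.one_mem one_pos
          linarith
        · have := h c₁ hc₁ hc₁pos
          linarith
      simp only [hj, if_false, ne_eq]
      refine ⟨hx0, ⟨1, R.one_mem, (h 1 R.one_mem one_pos).le⟩, ?_⟩
      rintro ⟨z, hz, hle⟩
      have habs : (0:F) < |x j| := abs_pos.mpr hx0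
      have hzpos : (0:F) < z := by
        have : (0:F) < |(x j)⁻¹| := abs_pos.mpr (inv_ne_zero hx0)
        linarith
      have h2 : |x j| < z⁻¹ := h z⁻¹ (R.inv_mem hz) (by positivity)
      rw [abs_inv] at hle
      have h3 : z⁻¹ ≤ |x j| := by
        rw [inv_le_comm₀ hzpos habs]
        exact hle
      linarith
  · -- the map
    have hle : unitSubgroup (convexHullSubring R.toSubring) ≤
        Subgroup.comap (MonoidHom.id Fˣ) (unitSubgroup (convexHullSubring (pointRing R x))) := by
      rintro u ⟨hu1, hu2⟩
      exact ⟨h1 _ hu1, h1 _ hu2⟩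
    refine ⟨QuotientGroup.map _ _ (MonoidHom.id Fˣ) hle, ?_, ?_, ?_, ?_⟩
    · intro q
      obtain ⟨u, rfl⟩ := QuotientGroup.mk_surjective q
      exact ⟨QuotientGroup.mk u, rfl⟩
    · intro u
      rfl
    · rintro a b ⟨u, w, rfl, rfl, hm⟩
      exact ⟨u, w, rfl, rfl, h1 _ hm⟩
    · intro j u w hu hw
      by_cases hj : j ∈ T
      · have huw : u = w⁻¹ := by
          ext
          simp only [hj, if_true] at hu
          rw [hu, Units.val_inv_eq_inv_val, hw]
        have hmem : (w * w : Fˣ) ∈ unitSubgroup (convexHullSubring (pointRing R x)) := by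
          obtain ⟨hx0, hxim⟩ := hTinv j hj
          constructor
          · show ((w * w : Fˣ) : F) ∈ _
            rw [Units.val_mul, hw]
            refine Subring.mul_mem _ ?_ ?_ <;>
            · refine ⟨|x j|, ?_, le_refl _⟩
              rcases abs_cases (x j) with ⟨he, _⟩ | ⟨he, _⟩
              · rw [he]; exact hxmem j
              · rw [he]; exact Subring.neg_mem _ (hxmem j)
          · show (((w * w)⁻¹ : Fˣ) : F) ∈ _
            have : (((w * w)⁻¹ : Fˣ) : F) = (x j)⁻¹ * (x j)⁻¹ := by
              rw [mul_inv, Units.val_mul, Units.val_inv_eq_inv_val, hw]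
            rw [this]
            exact Subring.mul_mem _ (h1 _ hxim) (h1 _ hxim)
        have : (QuotientGroup.mk u : Fˣ ⧸ unitSubgroup (convexHullSubring (pointRing R x))) =
            QuotientGroup.mk w := by
          rw [huw, QuotientGroup.eq, inv_inv]
          exact hmem
        simpa using this
      · have huw : u = w := by
          ext
          simp only [hj, if_false] at hu
          rw [hu, hw]
        rw [huw]
        rfl
end

section
/- In the setting above, suppose additionally that ν_δ(x_{p+1}), …, ν_δ(x_n) are ℚ-linearly independent in Γ_δ (where ν_δ(x_j)=0 for j ≤ p and ν_δ(x_j)>0 for j > p). Then ν_{δ*}(y_{p+1}), …, ν_{δ*}(y_n) are ℚ-linearly independent in Γ_{δ*}, and for every (m_{p+1},…,m_n) ∈ ℤ^{n−p}: Σ m_j ν_δ(x_j) > 0 if and only if Σ m_j ν_{δ*}(y_j) > 0. Consequently the subgroup of Γ_{δ*} generated by the ν_{δ*}(y_j) (j > p) is isomorphic, as an ordered group with marked generators, to the subgroup of Γ_δ generated by the ν_δ(x_j) (j > p). -/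
section Aux

variable {F : Type*} [Field F] [LinearOrder F] [IsStrictOrderedRing F]

lemma mem_convexHullSubring {B : Subring F} {a : F} :
    a ∈ convexHullSubring B ↔ ∃ z ∈ B, |a| ≤ z := Iff.rfl

lemma convexHullSubring_mono {B C : Subring F} (h : B ≤ C) :
    convexHullSubring B ≤ convexHullSubring C := by
  rintro a ⟨z, hz, ha⟩
  exact ⟨z, h hz, ha⟩

lemma mem_convexHullSubring_of_inv_not_mem {B C : Subring F} {z : F} (hz : z ≠ 0)
    (h : z⁻¹ ∉ convexHullSubring B) : z ∈ convexHullSubring C := by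
  have h1 : ¬ (|z⁻¹| ≤ 1) := fun hle => h ⟨1, B.one_mem, hle⟩
  push_neg at h1
  rw [abs_inv] at h1
  exact ⟨1, C.one_mem, (one_lt_inv_iff₀.mp h1).2.le⟩

end Aux

/-- Setting of the previous statements, assuming moreover that
`ν_δ(x_{p+1}), …, ν_δ(x_n)` are `ℚ`-linearly independent in `Γ_δ`.  Then
`ν_{δ*}(y_{p+1}), …, ν_{δ*}(y_n)` are `ℚ`-linearly independent in `Γ_{δ*}`; for every
integer tuple `m`, `Σ m_j ν_δ(x_j) > 0` iff `Σ m_j ν_{δ*}(y_j) > 0`; and the subgroup of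
`Γ_{δ*}` generated by the `ν_{δ*}(y_j)` (`j > p`) is isomorphic, as an ordered group with
marked generators, to the subgroup of `Γ_δ` generated by the `ν_δ(x_j)` (`j > p`).
(Here `ν(g) = 0` is expressed by `g, g⁻¹ ∈ V` and `ν(g) > 0` by `g ∈ V`, `g⁻¹ ∉ V`.) -/
theorem induced_valuation_ogm_equiv {F : Type*} [Field F] [LinearOrder F] [IsStrictOrderedRing F]
    (R : Subfield F) (hR : IsRealClosedSubfield R) {n : ℕ} (x : Fin n → F) (p : ℕ)
    (T : Finset (Fin n))
    (hT1 : ∀ j : Fin n, IsInfiniteOver R (x j) → j ∈ T)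
    (hT2 : ∀ j ∈ T, IsInfiniteOver R (x j) ∨ IsBoundedUnitOver R (x j))
    (y : Fin n → F) (hy : y = fun j => if j ∈ T then (x j)⁻¹ else x j)
    (Vδ : Subring F) (hVδ : Vδ = convexHullSubring (pointRing R x))
    (Vstar : Subring F) (hVstar : Vstar = convexHullSubring R.toSubring)
    -- `ν_δ(x j) = 0` for `j ≤ p`
    (h0 : ∀ j : Fin n, (j : ℕ) < p → x j ≠ 0 ∧ x j ∈ Vδ ∧ (x j)⁻¹ ∈ Vδ)
    -- `ν_δ(x j) > 0` for `j > p`, with `x j ≠ 0` (so that `ν_δ(x j) ∈ Γ_δ`)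
    (hpos : ∀ j : Fin n, p ≤ (j : ℕ) → x j ≠ 0 ∧ (x j)⁻¹ ∉ Vδ)
    -- `ν_δ(x_{p+1}), …, ν_δ(x_n)` are `ℚ`-linearly independent:
    -- no nontrivial integer combination `Σ m_j ν_δ(x_j)` vanishes
    (hind : ∀ m : Fin n → ℤ, (∀ j : Fin n, (j : ℕ) < p → m j = 0) →
      (∏ j, x j ^ m j) ∈ Vδ → (∏ j, x j ^ m j)⁻¹ ∈ Vδ → ∀ j, m j = 0)
    (G1 : Subgroup (Fˣ ⧸ unitSubgroup Vstar))
    (hG1 : G1 = Subgroup.closure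
      {g | ∃ j : Fin n, p ≤ (j : ℕ) ∧ ∃ u : Fˣ, (u : F) = y j ∧ g = QuotientGroup.mk u})
    (G2 : Subgroup (Fˣ ⧸ unitSubgroup Vδ))
    (hG2 : G2 = Subgroup.closure
      {g | ∃ j : Fin n, p ≤ (j : ℕ) ∧ ∃ u : Fˣ, (u : F) = x j ∧ g = QuotientGroup.mk u}) :
    -- the `ν_{δ*}(y_j)`, `j > p`, are `ℚ`-linearly independent
    (∀ m : Fin n → ℤ, (∀ j : Fin n, (j : ℕ) < p → m j = 0) →
      (∏ j, y j ^ m j) ∈ Vstar → (∏ j, y j ^ m j)⁻¹ ∈ Vstar → ∀ j, m j = 0) ∧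
    -- `Σ m_j ν_δ(x_j) > 0 ↔ Σ m_j ν_{δ*}(y_j) > 0`
    (∀ m : Fin n → ℤ, (∀ j : Fin n, (j : ℕ) < p → m j = 0) →
      (((∏ j, x j ^ m j) ∈ Vδ ∧ (∏ j, x j ^ m j)⁻¹ ∉ Vδ) ↔
        ((∏ j, y j ^ m j) ∈ Vstar ∧ (∏ j, y j ^ m j)⁻¹ ∉ Vstar))) ∧
    -- the marked subgroups of the value groups are isomorphic as ordered groups
    ∃ e : G1 ≃* G2,
      (∀ a b : G1, valueGroupLE Vstar (a : Fˣ ⧸ unitSubgroup Vstar) b ↔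
        valueGroupLE Vδ (e a : Fˣ ⧸ unitSubgroup Vδ) (e b)) ∧
      ∀ (j : Fin n), p ≤ (j : ℕ) → ∀ (u w : Fˣ), (u : F) = y j → (w : F) = x j →
        ∀ (hu : QuotientGroup.mk u ∈ G1) (hw : QuotientGroup.mk w ∈ G2),
          e ⟨QuotientGroup.mk u, hu⟩ = ⟨QuotientGroup.mk w, hw⟩ := by
  classical
  -- basic containments and nonvanishing
  have hBsub : R.toSubring ≤ pointRing R x := fun a ha =>
    Subring.subset_closure (Set.mem_union_left _ ha)
  have hsub : Vstar ≤ Vδ := by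
    rw [hVstar, hVδ]; exact convexHullSubring_mono hBsub
  have hxne : ∀ j, x j ≠ 0 := fun j =>
    (lt_or_ge (j : ℕ) p).elim (fun h => (h0 j h).1) (fun h => (hpos j h).1)
  have hinvV : ∀ z : F, z ≠ 0 → z⁻¹ ∉ Vδ → z ∈ Vstar := by
    intro z hz h
    rw [hVδ] at h; rw [hVstar]
    exact mem_convexHullSubring_of_inv_not_mem hz h
  -- y j = x j for j ≥ p
  have hyx : ∀ j : Fin n, p ≤ (j : ℕ) → y j = x j := by
    intro j hj
    rw [hy]
    simp only
    rw [if_neg]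
    intro hjT
    have hninv : (x j)⁻¹ ∉ Vstar := fun h => (hpos j hj).2 (hsub h)
    rcases hT2 j hjT with h | h
    · have h1 : (1 : F) < |x j| := h 1 R.one_mem
      apply hninv
      rw [hVstar]
      refine ⟨1, Subring.one_mem _, ?_⟩
      rw [abs_inv]
      exact inv_le_one_of_one_le₀ h1.le
    · rcases h with ⟨c₁, hc₁R, c₂, _, hc₁pos, hlt, _⟩
      apply hninv
      rw [hVstar]
      refine ⟨c₁⁻¹, (Subfield.mem_toSubring R c₁⁻¹).mpr (R.inv_mem hc₁R), ?_⟩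
      rw [abs_inv]
      exact inv_anti₀ hc₁pos hlt.le
  -- products over y and x coincide
  have hprod_eq : ∀ m : Fin n → ℤ, (∀ j : Fin n, (j : ℕ) < p → m j = 0) →
      ∏ j, y j ^ m j = ∏ j, x j ^ m j := by
    intro m hm
    refine Finset.prod_congr rfl fun j _ => ?_
    rcases lt_or_ge (j : ℕ) p with h | h
    · rw [hm j h, zpow_zero, zpow_zero]
    · rw [hyx j h]
  have hprodne : ∀ m : Fin n → ℤ, (∏ j, x j ^ m j) ≠ 0 := fun m =>
    Finset.prod_ne_zero_iff.mpr fun j _ => zpow_ne_zero _ (hxne j)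
  -- core sign equivalence
  have core : ∀ m : Fin n → ℤ, (∀ j : Fin n, (j : ℕ) < p → m j = 0) →
      (((∏ j, x j ^ m j) ∈ Vδ ∧ (∏ j, x j ^ m j)⁻¹ ∉ Vδ) ↔
        ((∏ j, x j ^ m j) ∈ Vstar ∧ (∏ j, x j ^ m j)⁻¹ ∉ Vstar)) := by
    intro m hm
    constructor
    · rintro ⟨h1, h2⟩
      exact ⟨hinvV _ (hprodne m) h2, fun h => h2 (hsub h)⟩
    · rintro ⟨h1, h2⟩
      refine ⟨hsub h1, fun hinv => ?_⟩
      have hall := hind m hm (hsub h1) hinv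
      apply h2
      have hone : (∏ j, x j ^ m j) = 1 :=
        Finset.prod_eq_one fun j _ => by rw [hall j, zpow_zero]
      rw [hone, inv_one]
      exact Vstar.one_mem
  refine ⟨?_, ?_, ?_⟩
  · -- independence for y
    intro m hm h1 h2
    rw [hprod_eq m hm] at h1 h2
    exact hind m hm (hsub h1) (hsub h2)
  · -- sign equivalence
    intro m hm
    rw [hprod_eq m hm] at *
    exact core m hm
  · -- the isomorphism of marked value subgroups
    have husub : unitSubgroup Vstar ≤ unitSubgroup Vδ := by
      rintro u ⟨h1, h2⟩
      exact ⟨hsub h1, hsub h2⟩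
    let φ : (Fˣ ⧸ unitSubgroup Vstar) →* (Fˣ ⧸ unitSubgroup Vδ) :=
      QuotientGroup.map _ _ (MonoidHom.id Fˣ) husub
    have hφmk : ∀ u : Fˣ, φ (QuotientGroup.mk u) = QuotientGroup.mk u := fun u =>
      QuotientGroup.map_mk _ _ _ _ u
    set S : Set Fˣ := {u : Fˣ | ∃ j : Fin n, p ≤ (j : ℕ) ∧ (u : F) = x j} with hS
    set Hgp : Subgroup Fˣ := Subgroup.closure S with hH
    -- G1 and G2 are images of Hgp
    have hG1' : G1 = Hgp.map (QuotientGroup.mk' (unitSubgroup Vstar)) := by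
      rw [hG1, hH, MonoidHom.map_closure]
      congr 1
      ext g
      constructor
      · rintro ⟨j, hj, u, hu, rfl⟩
        exact ⟨u, ⟨j, hj, by rw [hu, hyx j hj]⟩, rfl⟩
      · rintro ⟨u, ⟨j, hj, hu⟩, rfl⟩
        exact ⟨j, hj, u, by rw [hu, hyx j hj], rfl⟩
    have hG2' : G2 = Hgp.map (QuotientGroup.mk' (unitSubgroup Vδ)) := by
      rw [hG2, hH, MonoidHom.map_closure]
      congr 1
      ext g
      constructor
      · rintro ⟨j, hj, u, hu, rfl⟩
        exact ⟨u, ⟨j, hj, hu⟩, rfl⟩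
      · rintro ⟨u, ⟨j, hj, hu⟩, rfl⟩
        exact ⟨j, hj, u, hu, rfl⟩
    -- every element of Hgp has value a product of powers of the x j
    have Hrep : ∀ u : Fˣ, u ∈ Hgp → ∃ m : Fin n → ℤ,
        (∀ j : Fin n, (j : ℕ) < p → m j = 0) ∧ (u : F) = ∏ j, x j ^ m j := by
      intro u hu
      induction hu using Subgroup.closure_induction with
      | mem v hv =>
        rcases hv with ⟨j, hj, hvx⟩
        refine ⟨fun k => if k = j then 1 else 0, fun k hk =>
          if_neg (by rintro rfl; omega), ?_⟩
        rw [hvx, Finset.prod_eq_single j (fun k _ hk => by simp [hk]) (by simp)]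
        simp
      | one => exact ⟨0, fun _ _ => rfl, by simp⟩
      | mul v w _ _ hv hw =>
        rcases hv with ⟨m1, hm1, h1⟩
        rcases hw with ⟨m2, hm2, h2⟩
        refine ⟨m1 + m2, fun j hj => by rw [Pi.add_apply, hm1 j hj, hm2 j hj, add_zero], ?_⟩
        rw [Units.val_mul, h1, h2, ← Finset.prod_mul_distrib]
        exact Finset.prod_congr rfl fun j _ => (zpow_add₀ (hxne j) _ _).symm
      | inv v _ hv =>
        rcases hv with ⟨m1, hm1, h1⟩
        refine ⟨-m1, fun j hj => by rw [Pi.neg_apply, hm1 j hj, neg_zero], ?_⟩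
        rw [Units.val_inv_eq_inv_val, h1, ← Finset.prod_inv_distrib]
        exact Finset.prod_congr rfl fun j _ => (zpow_neg (x j) (m1 j)).symm
    -- key transfer of membership
    have Hkey : ∀ v : Fˣ, v ∈ Hgp → (v : F) ∈ Vδ → (v : F) ∈ Vstar := by
      intro v hv h1
      rcases Hrep v hv with ⟨m, hm, hval⟩
      by_cases hinv : ((v : F))⁻¹ ∈ Vδ
      · rw [hval] at h1 hinv ⊢
        have hz := hind m hm h1 hinv
        rw [Finset.prod_eq_one fun j _ => by rw [hz j, zpow_zero]]
        exact Vstar.one_mem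
      · exact hinvV _ (Units.ne_zero v) hinv
    have Hunit : ∀ v : Fˣ, v ∈ Hgp → v ∈ unitSubgroup Vδ → v = 1 := by
      rintro v hv ⟨h1, h2⟩
      rcases Hrep v hv with ⟨m, hm, hval⟩
      have h2' : ((v : F))⁻¹ ∈ Vδ := by
        rw [← Units.val_inv_eq_inv_val]; exact h2
      rw [hval] at h1 h2'
      have hz := hind m hm h1 h2'
      apply Units.ext
      rw [hval, Finset.prod_eq_one fun j _ => by rw [hz j, zpow_zero]]
      rfl
    -- the restricted homomorphism
    have hmem2 : ∀ g : G1, φ (g : Fˣ ⧸ unitSubgroup Vstar) ∈ G2 := by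
      rintro ⟨g, hg⟩
      rw [hG1'] at hg
      rcases hg with ⟨u, hu, rfl⟩
      rw [hG2']
      have : φ (QuotientGroup.mk' (unitSubgroup Vstar) u)
          = QuotientGroup.mk' (unitSubgroup Vδ) u := hφmk u
      rw [this]
      exact Subgroup.mem_map_of_mem _ hu
    let ψ : G1 →* G2 := (φ.comp G1.subtype).codRestrict G2 hmem2
    have hψval : ∀ g : G1, (ψ g : Fˣ ⧸ unitSubgroup Vδ) = φ (g : Fˣ ⧸ unitSubgroup Vstar) :=
      fun g => rfl
    have hinj : Function.Injective ψ := by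
      rw [injective_iff_map_eq_one]
      rintro ⟨g, hg⟩ h
      have hg' : g ∈ Hgp.map (QuotientGroup.mk' (unitSubgroup Vstar)) := hG1' ▸ hg
      rcases hg' with ⟨u, hu, hgu⟩
      have h1 : φ g = 1 := congrArg Subtype.val h
      have hgu' : (QuotientGroup.mk u : Fˣ ⧸ unitSubgroup Vstar) = g := hgu
      have h2 : (QuotientGroup.mk u : Fˣ ⧸ unitSubgroup Vδ) = 1 := by
        rw [← hφmk u, hgu']; exact h1
      have h3 : u ∈ unitSubgroup Vδ := (QuotientGroup.eq_one_iff u).mp h2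
      have h4 : u = 1 := Hunit u hu h3
      apply Subtype.ext
      show g = 1
      rw [← hgu', h4]
      exact QuotientGroup.mk_one _
    have hsurj : Function.Surjective ψ := by
      rintro ⟨b, hb⟩
      rw [hG2'] at hb
      rcases hb with ⟨u, hu, hbu⟩
      have ha : (QuotientGroup.mk' (unitSubgroup Vstar) u : Fˣ ⧸ unitSubgroup Vstar) ∈ G1 := by
        rw [hG1']
        exact Subgroup.mem_map_of_mem _ hu
      refine ⟨⟨_, ha⟩, Subtype.ext ?_⟩
      show φ (QuotientGroup.mk' (unitSubgroup Vstar) u) = b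
      rw [← hbu]
      exact hφmk u
    refine ⟨MulEquiv.ofBijective ψ ⟨hinj, hsurj⟩, ?_, ?_⟩
    · -- order preservation
      intro a b
      constructor
      · rintro ⟨u, w, hu, hw, hmem⟩
        refine ⟨u, w, ?_, ?_, hsub hmem⟩
        · show φ (a : Fˣ ⧸ unitSubgroup Vstar) = _
          rw [hu, hφmk]
        · show φ (b : Fˣ ⧸ unitSubgroup Vstar) = _
          rw [hw, hφmk]
      · rintro ⟨u, w, hu, hw, hmem⟩
        have ha' : (a : Fˣ ⧸ unitSubgroup Vstar) ∈ Hgp.map (QuotientGroup.mk' (unitSubgroup Vstar)) :=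
          hG1' ▸ a.2
        have hb' : (b : Fˣ ⧸ unitSubgroup Vstar) ∈ Hgp.map (QuotientGroup.mk' (unitSubgroup Vstar)) :=
          hG1' ▸ b.2
        rcases ha' with ⟨U, hU, haU⟩
        rcases hb' with ⟨W, hW, hbW⟩
        refine ⟨U, W, haU.symm, hbW.symm, ?_⟩
        -- compare classes in the δ-quotient
        have hu' : (QuotientGroup.mk U : Fˣ ⧸ unitSubgroup Vδ) = QuotientGroup.mk u := by
          rw [← hφmk U]
          show φ (QuotientGroup.mk' (unitSubgroup Vstar) U) = _
          rw [haU, ← hu]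
          rfl
        have hw' : (QuotientGroup.mk W : Fˣ ⧸ unitSubgroup Vδ) = QuotientGroup.mk w := by
          rw [← hφmk W]
          show φ (QuotientGroup.mk' (unitSubgroup Vstar) W) = _
          rw [hbW, ← hw]
          rfl
        have hq : (QuotientGroup.mk (w * u⁻¹) : Fˣ ⧸ unitSubgroup Vδ)
            = QuotientGroup.mk (W * U⁻¹) := by
          rw [QuotientGroup.mk_mul, QuotientGroup.mk_mul, QuotientGroup.mk_inv,
            QuotientGroup.mk_inv, hu', hw']
        have hs : (w * u⁻¹)⁻¹ * (W * U⁻¹) ∈ unitSubgroup Vδ := QuotientGroup.eq.mp hq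
        have hval : ((W * U⁻¹ : Fˣ) : F)
            = ((w * u⁻¹ : Fˣ) : F) * (((w * u⁻¹)⁻¹ * (W * U⁻¹) : Fˣ) : F) := by
          rw [← Units.val_mul, mul_inv_cancel_left]
        have hWU : ((W * U⁻¹ : Fˣ) : F) ∈ Vδ := by
          rw [hval]
          exact Vδ.mul_mem hmem hs.1
        exact Hkey _ (Hgp.mul_mem hW (Hgp.inv_mem hU)) hWU
    · -- marked generators
      intro j hj u w hu hw hmemu hmemw
      have huw : u = w := Units.ext (by rw [hu, hw, hyx j hj])
      apply Subtype.ext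
      show φ (QuotientGroup.mk u) = QuotientGroup.mk w
      rw [hφmk, huw]
end

section
/- Let R be a real closed field, A = R[x₁,…,x_n]. For each triple (I, F, G) of pairwise disjoint subsets of {1,…,n} with I = ∅ whenever G = ∅, define U_{I,F,G} ⊆ Sper A as the set of δ such that: ν_δ(x_j) = 0 exactly for j ∈ I ∪ F ∪ G and ν_δ(x_j) > 0 for j ∉ I ∪ F ∪ G; |x_j|_δ < ε for all positive ε ∈ R when j ∈ I; c₁ < |x_j|_δ < c₂ for some positive c₁, c₂ ∈ R when j ∈ F; and |x_j|_δ > N for all N ∈ R when j ∈ G. Then Sper A is the disjoint union of the sets U_{I,F,G} over all such triples. -/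
/-- Let `R` be a real closed field, `A = R[x₁,…,x_n]`, and `δ` a point of `Sper A`
(presented by its ordered residue field `F ⊇ R` and the coordinates `x j`), with valuation
ring `R_δ` the convex hull of `A[δ]`.  Then `δ` belongs to exactly one of the sets
`U_{I,F,G}`: there is a unique triple `(I, F, G)` of pairwise disjoint subsets of
`{1,…,n}` with `I = ∅` whenever `G = ∅`, such that `ν_δ(x_j) = 0` exactly for
`j ∈ I ∪ F ∪ G` (and `ν_δ(x_j) > 0` otherwise), the coordinates indexed by `I` are
infinitesimal over `R`, those indexed by `F` lie between two positive constants of `R`,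
and those indexed by `G` are infinitely large over `R`.  Hence
`Sper A = ∐_{I,F,G} U_{I,F,G}`. -/
theorem sper_partition {F : Type*} [Field F] [LinearOrder F] [IsStrictOrderedRing F]
    (R : Subfield F) (hR : IsRealClosedSubfield R) {n : ℕ} (x : Fin n → F)
    (Vδ : Subring F) (hVδ : Vδ = convexHullSubring (pointRing R x)) :
    ∃! t : Finset (Fin n) × Finset (Fin n) × Finset (Fin n),
      Disjoint t.1 t.2.1 ∧ Disjoint t.1 t.2.2 ∧ Disjoint t.2.1 t.2.2 ∧
      (t.2.2 = ∅ → t.1 = ∅) ∧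
      (∀ j : Fin n, (j ∈ t.1 ∪ t.2.1 ∪ t.2.2) ↔
        (x j ≠ 0 ∧ x j ∈ Vδ ∧ (x j)⁻¹ ∈ Vδ)) ∧
      (∀ j : Fin n, j ∉ t.1 ∪ t.2.1 ∪ t.2.2 → x j = 0 ∨ (x j)⁻¹ ∉ Vδ) ∧
      (∀ j ∈ t.1, IsInfinitesimalOver R (x j)) ∧
      (∀ j ∈ t.2.1, IsBoundedUnitOver R (x j)) ∧
      (∀ j ∈ t.2.2, IsInfiniteOver R (x j)) := by
    classical
  subst hVδ
  set A : Subring F := pointRing R x with hA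
  set V : Subring F := convexHullSubring A with hV
  -- every coordinate lies in V
  have hxV : ∀ j, x j ∈ V := by
    intro j
    have hxA : x j ∈ A := Subring.subset_closure (Or.inr ⟨j, rfl⟩)
    rcases abs_choice (x j) with h | h
    · exact ⟨x j, hxA, h.le⟩
    · exact ⟨-x j, A.neg_mem hxA, h.le⟩
  -- mutual exclusivity
  have hIF : ∀ y : F, IsInfinitesimalOver R y → ¬ IsBoundedUnitOver R y := by
    rintro y h ⟨c₁, hc₁, c₂, hc₂, h0, h1, h2⟩
    exact absurd (h c₁ hc₁ h0) (not_lt.mpr h1.le)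
  have hIG : ∀ y : F, IsInfinitesimalOver R y → ¬ IsInfiniteOver R y := by
    intro y h h'
    exact absurd (h' 1 R.one_mem) (not_lt.mpr (h 1 R.one_mem one_pos).le)
  have hFG : ∀ y : F, IsBoundedUnitOver R y → ¬ IsInfiniteOver R y := by
    rintro y ⟨c₁, hc₁, c₂, hc₂, h0, h1, h2⟩ h'
    exact absurd (h' c₂ hc₂) (not_lt.mpr h2.le)
  -- trichotomy
  have tri : ∀ y : F, IsInfinitesimalOver R y ∨ IsBoundedUnitOver R y ∨ IsInfiniteOver R y := by
    intro y
    by_cases h1 : IsInfinitesimalOver R y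
    · exact Or.inl h1
    by_cases h2 : IsInfiniteOver R y
    · exact Or.inr (Or.inr h2)
    refine Or.inr (Or.inl ?_)
    unfold IsInfinitesimalOver at h1
    unfold IsInfiniteOver at h2
    push_neg at h1 h2
    obtain ⟨ε, hε, hε0, hεle⟩ := h1
    obtain ⟨N, hN, hNle⟩ := h2
    have h2R : (1 : F) + 1 ∈ R := R.add_mem R.one_mem R.one_mem
    refine ⟨ε / (1 + 1), R.div_mem hε h2R, N + 1, R.add_mem hN R.one_mem, ?_, ?_, ?_⟩
    · linarith
    · linarith
    · linarith
  -- an infinitely large coordinate is a unit of V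
  have hGU : ∀ j, IsInfiniteOver R (x j) → x j ≠ 0 ∧ x j ∈ V ∧ (x j)⁻¹ ∈ V := by
    intro j h
    have h1 : (1 : F) < |x j| := h 1 R.one_mem
    have hne : x j ≠ 0 := by
      intro h0
      rw [h0] at h1
      norm_num at h1
    refine ⟨hne, hxV j, ⟨1, A.one_mem, ?_⟩⟩
    rw [abs_inv]
    exact inv_le_one_of_one_le₀ h1.le
  -- if no coordinate is infinite, A is bounded by R
  have hbound : (∀ j, ¬ IsInfiniteOver R (x j)) → ∀ z ∈ A, ∃ r ∈ R, |z| ≤ r := by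
    intro hni z hz
    have hle : A ≤ convexHullSubring R.toSubring := by
      rw [hA, pointRing]
      apply Subring.closure_le.mpr
      rintro y (hy | ⟨j, rfl⟩)
      · rcases abs_choice y with h | h
        · exact ⟨y, hy, h.le⟩
        · exact ⟨-y, R.toSubring.neg_mem hy, h.le⟩
      · have h := hni j
        unfold IsInfiniteOver at h
        push_neg at h
        obtain ⟨N, hN, hNle⟩ := h
        exact ⟨N, hN, hNle⟩
    obtain ⟨r, hr, hzr⟩ := hle hz
    exact ⟨r, hr, hzr⟩
  -- key: no infinitesimal unit if no infinite coordinate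
  have hkey : (∀ j, ¬ IsInfiniteOver R (x j)) →
      ∀ j, x j ≠ 0 → (x j)⁻¹ ∈ V → ¬ IsInfinitesimalOver R (x j) := by
    intro hni j hne hinv hinfs
    obtain ⟨z, hzA, hzle⟩ := hinv
    obtain ⟨r, hrR, hzr⟩ := hbound hni z hzA
    have habs : 0 < |x j| := abs_pos.mpr hne
    have h1 : |x j|⁻¹ ≤ r := by
      rw [← abs_inv]
      exact hzle.trans ((le_abs_self z).trans hzr)
    have hr0 : 0 < r := lt_of_lt_of_le (inv_pos.mpr habs) h1
    have h3 : |x j| < r⁻¹ := hinfs r⁻¹ (R.inv_mem hrR) (inv_pos.mpr hr0)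
    have h4 : (1 : F) ≤ |x j| * r := by
      have := mul_le_mul_of_nonneg_left h1 habs.le
      rwa [mul_inv_cancel₀ habs.ne'] at this
    have h5 : |x j| * r < 1 := by
      have := mul_lt_mul_of_pos_right h3 hr0
      rwa [inv_mul_cancel₀ hr0.ne'] at this
    linarith
  -- the unit predicate
  set UP : Fin n → Prop := fun j => x j ≠ 0 ∧ x j ∈ V ∧ (x j)⁻¹ ∈ V with hUP
  set tI : Finset (Fin n) :=
    Finset.univ.filter (fun j => UP j ∧ IsInfinitesimalOver R (x j)) with htI
  set tF : Finset (Fin n) :=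
    Finset.univ.filter (fun j => UP j ∧ IsBoundedUnitOver R (x j)) with htF
  set tG : Finset (Fin n) :=
    Finset.univ.filter (fun j => UP j ∧ IsInfiniteOver R (x j)) with htG
  have memI : ∀ j, j ∈ tI ↔ UP j ∧ IsInfinitesimalOver R (x j) := by
    intro j; simp [htI]
  have memF : ∀ j, j ∈ tF ↔ UP j ∧ IsBoundedUnitOver R (x j) := by
    intro j; simp [htF]
  have memG : ∀ j, j ∈ tG ↔ UP j ∧ IsInfiniteOver R (x j) := by
    intro j; simp [htG]
  have hunion : ∀ j, j ∈ tI ∪ tF ∪ tG ↔ UP j := by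
    intro j
    simp only [Finset.mem_union, memI, memF, memG]
    constructor
    · rintro ((⟨h, _⟩ | ⟨h, _⟩) | ⟨h, _⟩) <;> exact h
    · intro h
      rcases tri (x j) with h' | h' | h'
      · exact Or.inl (Or.inl ⟨h, h'⟩)
      · exact Or.inl (Or.inr ⟨h, h'⟩)
      · exact Or.inr ⟨h, h'⟩
  refine ⟨(tI, tF, tG), ⟨?_, ?_, ?_, ?_, ?_, ?_, ?_, ?_, ?_⟩, ?_⟩
  · rw [Finset.disjoint_left]
    intro j hj hj'
    exact hIF _ ((memI j).mp hj).2 ((memF j).mp hj').2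
  · rw [Finset.disjoint_left]
    intro j hj hj'
    exact hIG _ ((memI j).mp hj).2 ((memG j).mp hj').2
  · rw [Finset.disjoint_left]
    intro j hj hj'
    exact hFG _ ((memF j).mp hj).2 ((memG j).mp hj').2
  · intro hGe
    have hGe' : tG = ∅ := hGe
    have hni : ∀ j, ¬ IsInfiniteOver R (x j) := by
      intro j hj
      have : j ∈ tG := (memG j).mpr ⟨hGU j hj, hj⟩
      rw [hGe'] at this
      exact absurd this (Finset.notMem_empty j)
    rw [Finset.eq_empty_iff_forall_notMem]
    intro j hj
    obtain ⟨⟨hne, _, hinv⟩, hinf⟩ := (memI j).mp hj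
    exact hkey hni j hne hinv hinf
  · exact hunion
  · intro j hj
    have hnu : ¬ UP j := mt (hunion j).mpr hj
    by_cases h0 : x j = 0
    · exact Or.inl h0
    · exact Or.inr fun hinv => hnu ⟨h0, hxV j, hinv⟩
  · intro j hj
    exact ((memI j).mp hj).2
  · intro j hj
    exact ((memF j).mp hj).2
  · intro j hj
    exact ((memG j).mp hj).2
  · rintro ⟨I', F', G'⟩ ⟨hd1, hd2, hd3, hGI, hmem, hcomp, hI, hF, hG⟩
    simp only [Prod.mk.injEq]
    have hU : ∀ j, j ∈ I' ∪ F' ∪ G' ↔ UP j := hmem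
    have classify : ∀ j, UP j → (j ∈ I' ∧ IsInfinitesimalOver R (x j)) ∨
        (j ∈ F' ∧ IsBoundedUnitOver R (x j)) ∨ (j ∈ G' ∧ IsInfiniteOver R (x j)) := by
      intro j hj
      have := (hU j).mpr hj
      rcases Finset.mem_union.mp this with h | h
      · rcases Finset.mem_union.mp h with h | h
        · exact Or.inl ⟨h, hI j h⟩
        · exact Or.inr (Or.inl ⟨h, hF j h⟩)
      · exact Or.inr (Or.inr ⟨h, hG j h⟩)
    refine ⟨?_, ?_, ?_⟩
    · ext j
      rw [memI]
      constructor
      · intro hj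
        have hu : UP j := (hU j).mp (Finset.mem_union.mpr (Or.inl (Finset.mem_union.mpr (Or.inl hj))))
        exact ⟨hu, hI j hj⟩
      · rintro ⟨hu, hinf⟩
        rcases classify j hu with ⟨h, _⟩ | ⟨_, hb⟩ | ⟨_, hb⟩
        · exact h
        · exact absurd hb (hIF _ hinf)
        · exact absurd hb (hIG _ hinf)
    · ext j
      rw [memF]
      constructor
      · intro hj
        have hu : UP j := (hU j).mp (Finset.mem_union.mpr (Or.inl (Finset.mem_union.mpr (Or.inr hj))))
        exact ⟨hu, hF j hj⟩
      · rintro ⟨hu, hb⟩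
        rcases classify j hu with ⟨_, hb'⟩ | ⟨h, _⟩ | ⟨_, hb'⟩
        · exact absurd hb (hIF _ hb')
        · exact h
        · exact absurd hb' (hFG _ hb)
    · ext j
      rw [memG]
      constructor
      · intro hj
        have hu : UP j := (hU j).mp (Finset.mem_union.mpr (Or.inr hj))
        exact ⟨hu, hG j hj⟩
      · rintro ⟨hu, hg⟩
        rcases classify j hu with ⟨_, hb'⟩ | ⟨_, hb'⟩ | ⟨h, _⟩
        · exact absurd hg (hIG _ hb')
        · exact absurd hg (hFG _ hb')
        · exact h
end
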